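/- arXiv:1009.1310 — 2 statements merged into one kernel-verified Lean document; each statement's English description precedes it below -/
import Mathlib

section
/- Let H be a real separable Hilbert space, and let f ∈ H^⊙p, g ∈ H^⊙q be symmetric tensors with p < q. Then ‖f ⊗_p g‖²_{H^⊗(q−p)} ≤ ‖f‖²_{H^⊗p} · ‖g ⊗_{q−p} g‖_{H^⊗2p}. -/
open Finset

/-- Padding: view a finite tuple of basis indices as defined on all of `ℕ`. -/
def pad {k : ℕ} (x : Fin k → ℕ) (n : ℕ) : ℕ := if h : n < k then x ⟨n, h⟩ else 0

/-- The contraction of order `r` of `f ∈ H^{⊗p}` and `g ∈ H^{⊗q}`, where tensors over the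
real separable Hilbert space `H` are represented by their (square-summable) coefficients
with respect to a complete orthonormal system indexed by `ℕ`. -/
noncomputable def contr (p q r : ℕ) (f : (Fin p → ℕ) → ℝ) (g : (Fin q → ℕ) → ℝ) :
    (Fin (p + q - 2*r) → ℕ) → ℝ :=
  fun x => ∑' s : Fin r → ℕ,
    f (fun i => if i.val < p - r then pad x i.val else pad s (i.val - (p - r))) *
    g (fun i => if i.val < q - r then pad x ((p - r) + i.val) else pad s (i.val - (q - r)))

/-- Squared norm `‖f‖²` of a tensor given by its coefficients. -/
noncomputable def nsq {k : ℕ} (f : (Fin k → ℕ) → ℝ) : ℝ := ∑' x : Fin k → ℕ, f x ^ 2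

/-- Inner product `⟨f, g⟩` of tensors given by their coefficients. -/
noncomputable def hinner {k : ℕ} (f g : (Fin k → ℕ) → ℝ) : ℝ := ∑' x : Fin k → ℕ, f x * g x

/-- Symmetrization of a tensor. -/
noncomputable def symz {k : ℕ} (f : (Fin k → ℕ) → ℝ) : (Fin k → ℕ) → ℝ :=
  fun x => (1 / (k.factorial : ℝ)) * ∑ σ : Equiv.Perm (Fin k), f (x ∘ σ)

/-- A tensor is symmetric if it is invariant under permutation of its arguments. -/
def IsSym {k : ℕ} (f : (Fin k → ℕ) → ℝ) : Prop :=
  ∀ (σ : Equiv.Perm (Fin k)) (x : Fin k → ℕ), f (x ∘ σ) = f x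

/-- Recasting a tensor along the canonical identification `Fin k ≃ Fin k'` when `k = k'`. -/
def recast {k : ℕ} (k' : ℕ) (f : (Fin k → ℕ) → ℝ) : (Fin k' → ℕ) → ℝ :=
  fun x => f (fun i => pad x i.val)



lemma pad_apply {k : ℕ} (x : Fin k → ℕ) (i : Fin k) : pad x i.val = x i := by
  simp [pad, i.isLt]

section auxsum
variable {ι : Type*} (u v : ι → ℝ)

lemma summable_mul_of_sq (hu : Summable fun i => u i ^ 2) (hv : Summable fun i => v i ^ 2) :
    Summable fun i => u i * v i := by
  rw [← summable_abs_iff]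
  refine Summable.of_nonneg_of_le (fun i => abs_nonneg _)
    (fun i => ?_) (((hu.add hv).div_const 2))
  rw [abs_mul]
  nlinarith [sq_nonneg (|u i| - |v i|), abs_nonneg (u i), abs_nonneg (v i), sq_abs (u i), sq_abs (v i)]

lemma tsum_abs_mul_le_sqrt (hu : Summable fun i => u i ^ 2) (hv : Summable fun i => v i ^ 2) :
    ∑' i, |u i * v i| ≤ Real.sqrt (∑' i, u i ^ 2) * Real.sqrt (∑' i, v i ^ 2) := by
  have hsum : Summable fun i => |u i * v i| := by
    rw [summable_abs_iff]; exact summable_mul_of_sq u v hu hv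
  refine Summable.tsum_le_of_sum_le hsum (fun s => ?_)
  calc ∑ i ∈ s, |u i * v i| = ∑ i ∈ s, |u i| * |v i| := by simp [abs_mul]
    _ ≤ Real.sqrt (∑ i ∈ s, |u i| ^ 2) * Real.sqrt (∑ i ∈ s, |v i| ^ 2) :=
        Real.sum_mul_le_sqrt_mul_sqrt s _ _
    _ ≤ Real.sqrt (∑' i, u i ^ 2) * Real.sqrt (∑' i, v i ^ 2) := by
        apply mul_le_mul <;>
        first
          | positivity
          | · apply Real.sqrt_le_sqrt
              simp only [sq_abs]
              exact Summable.sum_le_tsum s (fun i _ => sq_nonneg _) (by assumption)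

lemma tsum_mul_le_sqrt (hu : Summable fun i => u i ^ 2) (hv : Summable fun i => v i ^ 2) :
    ∑' i, u i * v i ≤ Real.sqrt (∑' i, u i ^ 2) * Real.sqrt (∑' i, v i ^ 2) := by
  refine le_trans ?_ (tsum_abs_mul_le_sqrt u v hu hv)
  refine Summable.tsum_le_tsum (fun i => le_abs_self _) (summable_mul_of_sq u v hu hv) ?_
  rw [summable_abs_iff]; exact summable_mul_of_sq u v hu hv

lemma sq_tsum_mul_le (hu : Summable fun i => u i ^ 2) (hv : Summable fun i => v i ^ 2) :
    (∑' i, u i * v i) ^ 2 ≤ (∑' i, u i ^ 2) * (∑' i, v i ^ 2) := by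
  have hsum : Summable fun i => |u i * v i| := by
    rw [summable_abs_iff]; exact summable_mul_of_sq u v hu hv
  have habs : |∑' i, u i * v i| ≤ ∑' i, |u i * v i| := by
    simpa [Real.norm_eq_abs, abs_mul] using norm_tsum_le_tsum_norm (f := fun i => u i * v i)
      (by simpa [Real.norm_eq_abs, abs_mul] using hsum)
  have h1 : |∑' i, u i * v i| ≤ Real.sqrt (∑' i, u i ^ 2) * Real.sqrt (∑' i, v i ^ 2) :=
    habs.trans (tsum_abs_mul_le_sqrt u v hu hv)
  have h2 : (∑' i, u i * v i) ^ 2 ≤ (Real.sqrt (∑' i, u i ^ 2) * Real.sqrt (∑' i, v i ^ 2)) ^ 2 := by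
    rw [← sq_abs]
    exact pow_le_pow_left₀ (abs_nonneg _) h1 2
  calc (∑' i, u i * v i) ^ 2 ≤ (Real.sqrt (∑' i, u i ^ 2) * Real.sqrt (∑' i, v i ^ 2)) ^ 2 := h2
    _ = (∑' i, u i ^ 2) * (∑' i, v i ^ 2) := by
        rw [mul_pow, Real.sq_sqrt (tsum_nonneg fun i => sq_nonneg _),
          Real.sq_sqrt (tsum_nonneg fun i => sq_nonneg _)]

end auxsum

/-- Concatenation of two tuples, with flexible target length. -/
def cat {m n : ℕ} (k : ℕ) (x : Fin m → ℕ) (s : Fin n → ℕ) : Fin k → ℕ :=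
  fun i => if i.val < m then pad x i.val else pad s (i.val - m)

def catEquiv (m n k : ℕ) (h : m + n = k) :
    ((Fin m → ℕ) × (Fin n → ℕ)) ≃ (Fin k → ℕ) where
  toFun z := cat k z.1 z.2
  invFun y := (fun i => y ⟨i.val, by omega⟩, fun j => y ⟨m + j.val, by omega⟩)
  left_inv := by
    rintro ⟨x, s⟩
    refine Prod.ext ?_ ?_ <;> funext i <;> simp only [cat]
    · rw [if_pos (show i.val < m from i.isLt), pad_apply]
    · rw [if_neg (by omega), Nat.add_sub_cancel_left, pad_apply]
  right_inv := by
    intro y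
    funext i
    simp only [cat, pad]
    by_cases h1 : i.val < m
    · rw [if_pos h1, dif_pos h1]
    · rw [if_neg h1, dif_pos (show i.val - m < n by omega)]
      congr 1
      exact Fin.ext (by simp; omega)

def rEquiv {k k' : ℕ} (h : k = k') : (Fin k → ℕ) ≃ (Fin k' → ℕ) where
  toFun y i := y ⟨i.val, by omega⟩
  invFun y i := y ⟨i.val, by omega⟩
  left_inv := by intro y; funext i; simp
  right_inv := by intro y; funext i; simp

lemma pad_rEquiv {k k' : ℕ} (h : k = k') (y : Fin k → ℕ) :
    pad (rEquiv h y) = pad y := by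
  subst h; funext n; simp [pad, rEquiv]


def rotPerm (p q : ℕ) (hpq : p ≤ q) : Equiv.Perm (Fin q) where
  toFun i := if h : i.val < q - p then ⟨i.val + p, by omega⟩ else ⟨i.val - (q - p), by omega⟩
  invFun i := if h : i.val < p then ⟨i.val + (q - p), by omega⟩ else ⟨i.val - p, by omega⟩
  left_inv := by
    intro i
    beta_reduce
    rcases Nat.lt_or_ge i.val (q - p) with h | h
    · rw [dif_pos h,
        dif_neg (show ¬((⟨i.val + p, by omega⟩ : Fin q).val < p) from by simp)]
      exact Fin.ext (by simp)
    · rw [dif_neg (Nat.not_lt.mpr h),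
        dif_pos (show ((⟨i.val - (q - p), by omega⟩ : Fin q).val < p) from by simp; omega)]
      exact Fin.ext (by simp; omega)
  right_inv := by
    intro i
    beta_reduce
    rcases Nat.lt_or_ge i.val p with h | h
    · rw [dif_pos h,
        dif_neg (show ¬((⟨i.val + (q - p), by omega⟩ : Fin q).val < q - p) from by simp)]
      exact Fin.ext (by simp)
    · rw [dif_neg (Nat.not_lt.mpr h),
        dif_pos (show ((⟨i.val - p, by omega⟩ : Fin q).val < q - p) from by simp; omega)]
      exact Fin.ext (by simp; omega)

lemma rotPerm_val (p q : ℕ) (hpq : p ≤ q) (i : Fin q) :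
    ((rotPerm p q hpq) i).val = if i.val < q - p then i.val + p else i.val - (q - p) := by
  by_cases h : i.val < q - p <;> simp [rotPerm, h]

lemma cat_swap {p q : ℕ} (hpq : p ≤ q) {g : (Fin q → ℕ) → ℝ} (hg : IsSym g)
    (s : Fin p → ℕ) (u : Fin (q - p) → ℕ) : g (cat q s u) = g (cat q u s) := by
  rw [← hg (rotPerm p q hpq) (cat q s u)]
  congr 1
  funext i
  show cat q s u ((rotPerm p q hpq) i) = cat q u s i
  simp only [cat]
  rw [rotPerm_val]
  by_cases h : i.val < q - p
  · rw [if_pos h, if_pos h, if_neg (by omega), Nat.add_sub_cancel]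
  · rw [if_neg h, if_neg h, if_pos (by omega)]

lemma pad_cat {m n : ℕ} (k : ℕ) (hk : m + n ≤ k) (x : Fin m → ℕ) (s : Fin n → ℕ) (j : ℕ) :
    pad (cat k x s) j = if j < m then pad x j else pad s (j - m) := by
  rw [pad]
  by_cases hj : j < k
  · rw [dif_pos hj]
    rfl
  · rw [dif_neg hj, if_neg (by omega), pad, dif_neg (by omega)]

set_option maxHeartbeats 2000000 in
theorem stmt_6 (p q : ℕ) (hp : 1 ≤ p) (hpq : p < q)
    (f : (Fin p → ℕ) → ℝ) (g : (Fin q → ℕ) → ℝ)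
    (hf : IsSym f) (hg : IsSym g)
    (hfs : Summable fun x => f x ^ 2) (hgs : Summable fun x => g x ^ 2) :
    nsq (contr p q p f g) ≤ nsq f * Real.sqrt (nsq (contr q q (q - p) g g)) := by
  have hq1 : (q - p) + p = q := by omega
  have hq2 : q - (q - p) = p := by omega
  have hq3 : q - p = p + q - 2*p := by omega
  -- summability of the G-family
  have hGsum : Summable (fun z : (Fin (q-p) → ℕ) × (Fin p → ℕ) => g (cat q z.1 z.2) ^ 2) :=
    ((catEquiv (q-p) p q hq1).summable_iff (f := fun y => g y ^ 2)).mpr hgs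
  have hGx : ∀ x : Fin (q-p) → ℕ, Summable fun s => g (cat q x s) ^ 2 := fun x => hGsum.prod_factor x
  have hGs : ∀ s : Fin p → ℕ, Summable fun x => g (cat q x s) ^ 2 := fun s => hGsum.prod_symm.prod_factor s
  have hBsum : Summable (fun s : Fin p → ℕ => ∑' x : Fin (q-p) → ℕ, g (cat q x s) ^ 2) :=
    ⟨_, hGsum.prod_symm.hasSum.prod_fiberwise (fun s => (hGsum.prod_symm.prod_factor s).hasSum)⟩
  have hAsq : Summable (fun w : (Fin p → ℕ) × (Fin p → ℕ) =>
      (∑' x : Fin (q-p) → ℕ, g (cat q x w.1) * g (cat q x w.2)) ^ 2) := by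
    refine Summable.of_nonneg_of_le (fun w => sq_nonneg _)
      (fun w => sq_tsum_mul_le _ _ (hGs w.1) (hGs w.2))
      (hBsum.mul_of_nonneg hBsum (fun s => tsum_nonneg fun x => sq_nonneg _)
        (fun s => tsum_nonneg fun x => sq_nonneg _))
  -- identification of the RHS
  have hRHS : nsq (contr q q (q - p) g g) = ∑' w : (Fin p → ℕ) × (Fin p → ℕ),
      (∑' x : Fin (q-p) → ℕ, g (cat q x w.1) * g (cat q x w.2)) ^ 2 := by
    rw [nsq, ← (catEquiv p p (q + q - 2*(q-p)) (by omega)).tsum_eq]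
    apply tsum_congr
    rintro ⟨s, t⟩
    congr 1
    show contr q q (q-p) g g (cat (q + q - 2*(q-p)) s t) = _
    rw [contr]
    apply tsum_congr
    intro u
    have e1 : (fun i : Fin q => if i.val < q - (q-p)
          then pad (cat (q + q - 2*(q-p)) s t) i.val
          else pad u (i.val - (q - (q-p)))) = cat q s u := by
      funext i
      simp only [hq2, cat]
      rw [pad_cat (m := p) (n := p) (q + q - 2*(q-p)) (by omega) s t]
      by_cases h : i.val < p
      · rw [if_pos h, if_pos h, if_pos h]
      · rw [if_neg h, if_neg h]
    have e2 : (fun i : Fin q => if i.val < q - (q-p)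
          then pad (cat (q + q - 2*(q-p)) s t) ((q - (q-p)) + i.val)
          else pad u (i.val - (q - (q-p)))) = cat q t u := by
      funext i
      simp only [hq2, cat]
      rw [pad_cat (m := p) (n := p) (q + q - 2*(q-p)) (by omega) s t]
      by_cases h : i.val < p
      · rw [if_pos h, if_pos h, if_neg (by omega), Nat.add_sub_cancel_left]
      · rw [if_neg h, if_neg h]
    rw [e1, e2, cat_swap hpq.le hg s u, cat_swap hpq.le hg t u]
  -- identification of the LHS
  have hLHS : nsq (contr p q p f g) = ∑' x : Fin (q-p) → ℕ,
      (∑' s : Fin p → ℕ, f s * g (cat q x s)) ^ 2 := by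
    rw [nsq, ← (rEquiv hq3).tsum_eq]
    apply tsum_congr
    intro x
    congr 1
    show contr p q p f g (rEquiv hq3 x) = _
    rw [contr]
    apply tsum_congr
    intro s
    congr 1
    · congr 1
      funext i
      simp only [Nat.sub_self, Nat.not_lt_zero, if_false, Nat.sub_zero, pad_apply]
    · congr 1
      funext i
      simp only [Nat.sub_self, Nat.zero_add, cat, pad_rEquiv hq3 x]
  -- expanding the square of the inner sum
  have hax : ∀ x : Fin (q-p) → ℕ, Summable fun s => f s * g (cat q x s) :=
    fun x => summable_mul_of_sq _ _ hfs (hGx x)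
  have haabs : ∀ x : Fin (q-p) → ℕ, Summable fun s => ‖f s * g (cat q x s)‖ :=
    fun x => by simpa only [Real.norm_eq_abs] using (hax x).abs
  have hsq : ∀ x : Fin (q-p) → ℕ, (∑' s : Fin p → ℕ, f s * g (cat q x s)) ^ 2 =
      ∑' w : (Fin p → ℕ) × (Fin p → ℕ),
        (f w.1 * g (cat q x w.1)) * (f w.2 * g (cat q x w.2)) := by
    intro x
    rw [sq, tsum_mul_tsum_of_summable_norm (haabs x) (haabs x)]
  -- the big summability for Fubini
  have hprod : Summable (fun w : (Fin p → ℕ) × ((Fin p → ℕ) × (Fin (q-p) → ℕ)) =>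
      f w.1 ^ 2 * g (cat q w.2.2 w.2.1) ^ 2) :=
    hfs.mul_of_nonneg hGsum.prod_symm (fun s => sq_nonneg _) (fun w => sq_nonneg _)
  have Hbig : Summable (fun z : ((Fin p → ℕ) × (Fin p → ℕ)) × (Fin (q-p) → ℕ) =>
      (f z.1.1 * g (cat q z.2 z.1.1)) * (f z.1.2 * g (cat q z.2 z.1.2))) := by
    rw [← summable_abs_iff]
    have h1 : Summable (fun z : ((Fin p → ℕ) × (Fin p → ℕ)) × (Fin (q-p) → ℕ) =>
        f z.1.1 ^ 2 * g (cat q z.2 z.1.2) ^ 2) :=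
      ((Equiv.prodAssoc _ _ _).summable_iff).mpr hprod
    have h2 : Summable (fun z : ((Fin p → ℕ) × (Fin p → ℕ)) × (Fin (q-p) → ℕ) =>
        f z.1.2 ^ 2 * g (cat q z.2 z.1.1) ^ 2) :=
      ((((Equiv.prodComm _ _).prodCongr (Equiv.refl (Fin (q-p) → ℕ))).trans
        (Equiv.prodAssoc _ _ _)).summable_iff).mpr hprod
    refine Summable.of_nonneg_of_le (fun z => abs_nonneg _) (fun z => ?_)
      ((h1.add h2).div_const 2)
    rw [abs_le]
    constructor <;>
      nlinarith [sq_nonneg (f z.1.1 * g (cat q z.2 z.1.2) - f z.1.2 * g (cat q z.2 z.1.1)),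
        sq_nonneg (f z.1.1 * g (cat q z.2 z.1.2) + f z.1.2 * g (cat q z.2 z.1.1))]
  -- Fubini
  have hswap : ∑' (x : Fin (q-p) → ℕ) (w : (Fin p → ℕ) × (Fin p → ℕ)),
        (f w.1 * g (cat q x w.1)) * (f w.2 * g (cat q x w.2))
      = ∑' (w : (Fin p → ℕ) × (Fin p → ℕ)) (x : Fin (q-p) → ℕ),
        (f w.1 * g (cat q x w.1)) * (f w.2 * g (cat q x w.2)) :=
    Summable.tsum_comm' Hbig (fun w => Hbig.prod_factor w) (fun x => Hbig.prod_symm.prod_factor x)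
  have hinner2 : ∀ w : (Fin p → ℕ) × (Fin p → ℕ),
      (∑' x : Fin (q-p) → ℕ, (f w.1 * g (cat q x w.1)) * (f w.2 * g (cat q x w.2)))
        = (f w.1 * f w.2) * ∑' x : Fin (q-p) → ℕ, g (cat q x w.1) * g (cat q x w.2) := by
    intro w
    rw [← tsum_mul_left]
    apply tsum_congr
    intro x
    ring
  -- Cauchy–Schwarz data
  have hffs : Summable fun w : (Fin p → ℕ) × (Fin p → ℕ) => (f w.1 * f w.2) ^ 2 :=
    (hfs.mul_of_nonneg hfs (fun s => sq_nonneg _) (fun s => sq_nonneg _)).congr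
      (fun w => (mul_pow _ _ _).symm)
  have hff : Real.sqrt (∑' w : (Fin p → ℕ) × (Fin p → ℕ), (f w.1 * f w.2) ^ 2) = nsq f := by
    have habs : Summable fun s : Fin p → ℕ => ‖f s ^ 2‖ := by
      simpa only [Real.norm_eq_abs, abs_pow, abs_abs, sq_abs] using hfs
    have h := tsum_mul_tsum_of_summable_norm habs habs
    have h2 : ∑' w : (Fin p → ℕ) × (Fin p → ℕ), (f w.1 * f w.2) ^ 2 = nsq f ^ 2 := by
      rw [nsq, sq, h]
      exact tsum_congr fun w => mul_pow _ _ _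
    have hn : 0 ≤ nsq f := by rw [nsq]; exact tsum_nonneg fun s => sq_nonneg _
    rw [h2, Real.sqrt_sq hn]
  -- final chain
  calc nsq (contr p q p f g)
      = ∑' x : Fin (q-p) → ℕ, (∑' s : Fin p → ℕ, f s * g (cat q x s)) ^ 2 := hLHS
    _ = ∑' (x : Fin (q-p) → ℕ) (w : (Fin p → ℕ) × (Fin p → ℕ)),
          (f w.1 * g (cat q x w.1)) * (f w.2 * g (cat q x w.2)) := tsum_congr hsq
    _ = ∑' (w : (Fin p → ℕ) × (Fin p → ℕ)) (x : Fin (q-p) → ℕ),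
          (f w.1 * g (cat q x w.1)) * (f w.2 * g (cat q x w.2)) := hswap
    _ = ∑' w : (Fin p → ℕ) × (Fin p → ℕ),
          (f w.1 * f w.2) * ∑' x : Fin (q-p) → ℕ, g (cat q x w.1) * g (cat q x w.2) :=
        tsum_congr hinner2
    _ ≤ Real.sqrt (∑' w : (Fin p → ℕ) × (Fin p → ℕ), (f w.1 * f w.2) ^ 2)
        * Real.sqrt (∑' w : (Fin p → ℕ) × (Fin p → ℕ),
            (∑' x : Fin (q-p) → ℕ, g (cat q x w.1) * g (cat q x w.2)) ^ 2) :=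
        tsum_mul_le_sqrt _ _ hffs hAsq
    _ = nsq f * Real.sqrt (nsq (contr q q (q - p) g g)) := by rw [hff, ← hRHS]
end

section
/- Let H be a real Hilbert space (identified with L²([0,T])), and let f, g ∈ H^⊙p be symmetric with 1 ≤ r ≤ p − 1. Suppose that for some constants A, B ≥ 0 one has ‖f ⊗_{p−r'} f‖²_{H^⊗2r'} ≤ (r'!)²((p−r')!)²/(p!)⁴ · A and ‖g ⊗_{p−r'} g‖²_{H^⊗2r'} ≤ (r'!)²((p−r')!)²/(p!)⁴ · B for all 1 ≤ r' ≤ p−1. Then Σ_{r=1}^{p−1} ((r−1)!)² C(p−1, r−1)⁴ (2p−2r)! · ‖f ⊗̃_r g‖²_{H^⊗(2p−2r)} ≤ (1/p²) · (A + B)/2 · Σ_{r=1}^{p−1} C(2r, r) · p². -/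
set_option maxHeartbeats 1000000


open Finset

noncomputable section
open scoped ENNReal

variable {ι : Type*}

lemma norm_rpow_two (x : ℝ) : ‖x‖ ^ (2 : ℝ≥0∞).toReal = x ^ 2 := by
  rw [show ((2:ℝ≥0∞).toReal) = ((2:ℕ):ℝ) by simp, Real.rpow_natCast, Real.norm_eq_abs, sq_abs]

lemma memℓp_two_iff (F : ι → ℝ) :
    Memℓp F 2 ↔ Summable (fun i => F i ^ 2) := by
  rw [memℓp_gen_iff (by norm_num : 0 < (2:ℝ≥0∞).toReal)]
  simp only [norm_rpow_two]

lemma lp_norm_sq (M : lp (fun _ : ι => ℝ) 2) : ‖M‖ ^ 2 = ∑' i, (M i : ℝ) ^ 2 := by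
  have h := lp.norm_rpow_eq_tsum (p := 2) (by norm_num) M
  simpa [norm_rpow_two, show ((2:ℝ≥0∞).toReal) = ((2:ℕ):ℝ) by simp, Real.rpow_natCast] using h

lemma lp_inner_eq (M N : lp (fun _ : ι => ℝ) 2) :
    (inner ℝ M N : ℝ) = ∑' i, M i * N i := by
  rw [lp.inner_eq_tsum]
  exact tsum_congr fun i => by simp only [RCLike.inner_apply, conj_trivial]; ring

def lpeval (i : ι) : lp (fun _ : ι => ℝ) 2 →L[ℝ] ℝ :=
  LinearMap.mkContinuous
    { toFun := fun F => F i
      map_add' := fun F G => by simp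
      map_smul' := fun c F => by simp [lp.coeFn_smul] } 1
    (fun F => by rw [one_mul]; exact lp.norm_apply_le_norm (by norm_num) F i)

lemma hasSum_apply {T : α → lp (fun _ : ι => ℝ) 2} {M : lp (fun _ : ι => ℝ) 2}
    (h : HasSum T M) (i : ι) : HasSum (fun a => T a i) (M i) := by
  exact (lpeval i).hasSum h

lemma summable_mul_sq {u v : ι → ℝ} (hu : Summable fun i => u i ^ 2)
    (hv : Summable fun i => v i ^ 2) : Summable fun i => u i * v i := by
  apply Summable.of_norm_bounded
    ((hu.div_const 2).add (hv.div_const 2))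
  intro i
  rw [Real.norm_eq_abs, abs_mul]
  nlinarith [sq_nonneg (|u i| - |v i|), sq_abs (u i), sq_abs (v i), abs_nonneg (u i),
    abs_nonneg (v i)]

lemma summable_abs_mul {u v : ι → ℝ} (hu : Summable fun i => u i ^ 2)
    (hv : Summable fun i => v i ^ 2) : Summable fun i => ‖u i * v i‖ := by
  refine Summable.of_nonneg_of_le (fun i => norm_nonneg _) (fun i => ?_)
    ((hu.div_const 2).add (hv.div_const 2))
  rw [Real.norm_eq_abs, abs_mul]
  nlinarith [sq_nonneg (|u i| - |v i|), sq_abs (u i), sq_abs (v i), abs_nonneg (u i),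
    abs_nonneg (v i)]

section build
variable {α γ : Type*} (F : α → γ → ℝ)

lemma colMem (hF : Summable (fun q : α × γ => F q.1 q.2 ^ 2)) (a : α) :
    Memℓp (fun st : γ × γ => F a st.1 * F a st.2) 2 := by
  rw [memℓp_two_iff]
  have hc : Summable fun s => F a s ^ 2 := hF.prod_factor a
  have h1 : Summable fun s : γ => ‖F a s ^ 2‖ := by
    apply hc.congr; intro s; rw [Real.norm_eq_abs, abs_of_nonneg (sq_nonneg _)]
  have := summable_mul_of_summable_norm (f := fun s => F a s ^ 2) (g := fun s => F a s ^ 2) h1 h1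
  apply this.congr
  intro st
  ring

noncomputable def Tk (hF : Summable (fun q : α × γ => F q.1 q.2 ^ 2)) (a : α) :
    lp (fun _ : γ × γ => ℝ) 2 := ⟨_, colMem F hF a⟩

lemma Tk_apply (hF : Summable (fun q : α × γ => F q.1 q.2 ^ 2)) (a : α) (st : γ × γ) :
    (Tk F hF a) st = F a st.1 * F a st.2 := rfl

lemma Tk_norm (hF : Summable (fun q : α × γ => F q.1 q.2 ^ 2)) (a : α) :
    ‖Tk F hF a‖ = ∑' s, F a s ^ 2 := by
  have hc : Summable fun s => F a s ^ 2 := hF.prod_factor a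
  have h1 : Summable fun s : γ => ‖F a s ^ 2‖ := by
    apply hc.congr; intro s; rw [Real.norm_eq_abs, abs_of_nonneg (sq_nonneg _)]
  have hprod : Summable fun z : γ × γ => F a z.1 ^ 2 * F a z.2 ^ 2 :=
    summable_mul_of_summable_norm h1 h1
  have hsq : ‖Tk F hF a‖ ^ 2 = (∑' s, F a s ^ 2) ^ 2 := by
    rw [lp_norm_sq]
    calc ∑' st : γ × γ, (Tk F hF a) st ^ 2
        = ∑' st : γ × γ, F a st.1 ^ 2 * F a st.2 ^ 2 := by
          apply tsum_congr; intro st; rw [Tk_apply]; ring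
      _ = (∑' s, F a s ^ 2) * (∑' s, F a s ^ 2) := (Summable.tsum_mul_tsum hc hc hprod).symm
      _ = (∑' s, F a s ^ 2) ^ 2 := (sq _).symm
  have h2 : (0:ℝ) ≤ ∑' s, F a s ^ 2 := tsum_nonneg fun s => sq_nonneg _
  nlinarith [norm_nonneg (Tk F hF a)]

lemma Tk_summable (hF : Summable (fun q : α × γ => F q.1 q.2 ^ 2)) :
    Summable (Tk F hF) := by
  apply Summable.of_norm
  have hm : Summable fun a => ∑' s, F a s ^ 2 :=
    ((summable_prod_of_nonneg (fun q => sq_nonneg _)).mp hF).2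
  apply hm.congr
  intro a
  exact (Tk_norm F hF a).symm

end build

lemma key {α β γ : Type*}
    (F : α → γ → ℝ) (G : β → γ → ℝ)
    (hF : Summable (fun q : α × γ => F q.1 q.2 ^ 2))
    (hG : Summable (fun q : β × γ => G q.1 q.2 ^ 2)) :
    Summable (fun ab : α × β => (∑' s, F ab.1 s * G ab.2 s) ^ 2) ∧
    (∑' ab : α × β, (∑' s, F ab.1 s * G ab.2 s) ^ 2)
      ≤ (∑' st : γ × γ, (∑' a, F a st.1 * F a st.2) ^ 2) / 2
        + (∑' st : γ × γ, (∑' b, G b st.1 * G b st.2) ^ 2) / 2 := by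
  have hMsum : Summable (Tk F hF) := Tk_summable F hF
  have hNsum : Summable (Tk G hG) := Tk_summable G hG
  set M : lp (fun _ : γ × γ => ℝ) 2 := ∑' a, Tk F hF a with hMdef
  set N : lp (fun _ : γ × γ => ℝ) 2 := ∑' b, Tk G hG b with hNdef
  have hM : HasSum (Tk F hF) M := hMsum.hasSum
  have hN : HasSum (Tk G hG) N := hNsum.hasSum
  -- pointwise values of M and N
  have hMpt : ∀ st : γ × γ, (M : (γ × γ) → ℝ) st = ∑' a, F a st.1 * F a st.2 := by
    intro st
    exact ((hasSum_apply hM st).tsum_eq).symm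
  have hNpt : ∀ st : γ × γ, (N : (γ × γ) → ℝ) st = ∑' b, G b st.1 * G b st.2 := by
    intro st
    exact ((hasSum_apply hN st).tsum_eq).symm
  -- the inner products ⟪T a, S b⟫ are the squares
  have claim1 : ∀ (a : α) (b : β),
      (inner ℝ (Tk F hF a) (Tk G hG b) : ℝ) = (∑' s, F a s * G b s) ^ 2 := by
    intro a b
    have hu : Summable fun s => F a s * G b s :=
      summable_mul_sq (hF.prod_factor a) (hG.prod_factor b)
    have habs : Summable fun s : γ => ‖F a s * G b s‖ :=
      summable_abs_mul (hF.prod_factor a) (hG.prod_factor b)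
    have hprod : Summable fun z : γ × γ => (F a z.1 * G b z.1) * (F a z.2 * G b z.2) :=
      summable_mul_of_summable_norm habs habs
    rw [lp_inner_eq]
    calc ∑' st : γ × γ, (Tk F hF a) st * (Tk G hG b) st
        = ∑' st : γ × γ, (F a st.1 * G b st.1) * (F a st.2 * G b st.2) := by
          apply tsum_congr; intro st; rw [Tk_apply, Tk_apply]; ring
      _ = (∑' s, F a s * G b s) * (∑' s, F a s * G b s) := (Summable.tsum_mul_tsum hu hu hprod).symm
      _ = (∑' s, F a s * G b s) ^ 2 := (sq _).symm
  -- fiberwise sums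
  have hfib : ∀ a : α, HasSum (fun b => (inner ℝ (Tk F hF a) (Tk G hG b) : ℝ))
      (inner ℝ (Tk F hF a) N : ℝ) := by
    intro a
    exact (innerSL ℝ (Tk F hF a)).hasSum hN
  have hmarg : HasSum (fun a => (inner ℝ (Tk F hF a) N : ℝ)) (inner ℝ M N : ℝ) := by
    have h1 : HasSum (fun a => (inner ℝ N (Tk F hF a) : ℝ)) (inner ℝ N M : ℝ) :=
      (innerSL ℝ N).hasSum hM
    have h2 : (fun a => (inner ℝ N (Tk F hF a) : ℝ)) = fun a => (inner ℝ (Tk F hF a) N : ℝ) :=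
      funext fun a => real_inner_comm _ _
    rw [h2] at h1
    rwa [real_inner_comm] at h1
  -- summability of the squared contraction family
  have hD : Summable (fun ab : α × β => (∑' s, F ab.1 s * G ab.2 s) ^ 2) := by
    apply (summable_prod_of_nonneg (fun ab => sq_nonneg _)).mpr
    constructor
    · intro a
      exact ((hfib a).summable).congr (fun b => claim1 a b)
    · apply hmarg.summable.congr
      intro a
      rw [← (hfib a).tsum_eq]
      exact (tsum_congr fun b => claim1 a b)
  refine ⟨hD, ?_⟩
  -- the total sum equals ⟪M, N⟫
  have hval : (∑' ab : α × β, (∑' s, F ab.1 s * G ab.2 s) ^ 2) = (inner ℝ M N : ℝ) := by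
    rw [Summable.tsum_prod' hD (fun a => ((hfib a).summable.congr (fun b => claim1 a b)))]
    rw [← hmarg.tsum_eq]
    apply tsum_congr; intro a
    rw [← (hfib a).tsum_eq]
    exact tsum_congr fun b => (claim1 a b).symm
  rw [hval]
  -- Cauchy–Schwarz and AM–GM
  have hcs : (inner ℝ M N : ℝ) ≤ ‖M‖ * ‖N‖ := real_inner_le_norm M N
  have hMn : ‖M‖ ^ 2 = ∑' st : γ × γ, (∑' a, F a st.1 * F a st.2) ^ 2 := by
    rw [lp_norm_sq]
    exact tsum_congr fun st => by rw [hMpt st]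
  have hNn : ‖N‖ ^ 2 = ∑' st : γ × γ, (∑' b, G b st.1 * G b st.2) ^ 2 := by
    rw [lp_norm_sq]
    exact tsum_congr fun st => by rw [hNpt st]
  rw [← hMn, ← hNn]
  nlinarith [sq_nonneg (‖M‖ - ‖N‖), hcs]

/-! ### Index gymnastics -/

def cmb (m : ℕ) {k : ℕ} (u v : ℕ → ℕ) : Fin k → ℕ :=
  fun i => if i.val < m then u i.val else v (i.val - m)

def glueEquiv (m n k : ℕ) (hk : k = m + n) :
    ((Fin m → ℕ) × (Fin n → ℕ)) ≃ (Fin k → ℕ) where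
  toFun ab := cmb m (pad ab.1) (pad ab.2)
  invFun x := (fun j => x ⟨j.val, by omega⟩, fun j => x ⟨m + j.val, by omega⟩)
  left_inv ab := by
    obtain ⟨a, b⟩ := ab
    refine Prod.ext ?_ ?_ <;> funext j <;> simp only [cmb, pad]
    · rw [if_pos j.isLt, dif_pos j.isLt]
    · rw [if_neg (by omega), dif_pos (by omega : m + j.val - m < n)]
      have hj : m + j.val - m = j.val := by omega
      simp only [hj]
  right_inv x := by
    funext i
    simp only [cmb, pad]
    by_cases h : i.val < m
    · rw [if_pos h, dif_pos h]
    · rw [if_neg h, dif_pos (by omega : i.val - m < n)]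
      have hi : m + (i.val - m) = i.val := by omega
      simp only [hi]

lemma pad_glue_lt {m n k : ℕ} (hk : k = m + n) (a : Fin m → ℕ) (b : Fin n → ℕ)
    {j : ℕ} (hj : j < m) : pad (glueEquiv m n k hk (a, b)) j = pad a j := by
  simp only [glueEquiv, Equiv.coe_fn_mk, cmb, pad]
  rw [dif_pos (by omega : j < k), if_pos hj]

lemma pad_glue_ge {m n k : ℕ} (hk : k = m + n) (a : Fin m → ℕ) (b : Fin n → ℕ)
    {j : ℕ} (hj : j < n) : pad (glueEquiv m n k hk (a, b)) (m + j) = pad b j := by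
  simp only [glueEquiv, Equiv.coe_fn_mk, cmb, pad]
  rw [dif_pos (by omega : m + j < k), if_neg (by omega)]
  have hj2 : m + j - m = j := by omega
  simp only [hj2]

/-- Block-swap permutation of `Fin p`: first `p - r` entries move up by `r`. -/
def bswap (r p : ℕ) (h : r ≤ p) : Equiv.Perm (Fin p) where
  toFun i := ⟨if i.val < p - r then r + i.val else i.val - (p - r), by split_ifs <;> omega⟩
  invFun i := ⟨if i.val < r then i.val + (p - r) else i.val - r, by split_ifs <;> omega⟩
  left_inv i := Fin.ext (by simp only [Fin.val_mk]; split_ifs <;> omega)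
  right_inv i := Fin.ext (by simp only [Fin.val_mk]; split_ifs <;> omega)

/-- Using symmetry, the two blocks of arguments can be swapped. -/
lemma swap_eval {p r : ℕ} (h : r ≤ p) {f : (Fin p → ℕ) → ℝ} (hf : IsSym f)
    (u v : ℕ → ℕ) :
    f (cmb r u v) = f (cmb (p - r) v u) := by
  calc f (cmb r u v) = f (cmb r u v ∘ (bswap r p h)) := (hf _ _).symm
    _ = f (cmb (p - r) v u) := by
        congr 1
        funext i
        simp only [Function.comp_apply, cmb, bswap, Equiv.coe_fn_mk, Fin.val_mk]
        split_ifs with h1 h2 h3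
        · exfalso; omega
        · congr 1; omega
        · rfl
        · exfalso; omega

/-! ### Symmetrization decreases the norm -/

def permEquiv {k : ℕ} (σ : Equiv.Perm (Fin k)) : (Fin k → ℕ) ≃ (Fin k → ℕ) where
  toFun x := x ∘ σ
  invFun x := x ∘ σ.symm
  left_inv x := by funext i; simp
  right_inv x := by funext i; simp

lemma nsq_nonneg {k : ℕ} (h : (Fin k → ℕ) → ℝ) : 0 ≤ nsq h :=
  tsum_nonneg fun x => sq_nonneg _

lemma nsq_symz_le {k : ℕ} (h : (Fin k → ℕ) → ℝ) (hs : Summable fun x => h x ^ 2) :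
    nsq (symz h) ≤ nsq h := by
  classical
  have hσs : ∀ σ : Equiv.Perm (Fin k), Summable fun x => h (x ∘ σ) ^ 2 := fun σ =>
    ((permEquiv σ).summable_iff (f := fun x => h x ^ 2)).mpr hs
  set H : Equiv.Perm (Fin k) → lp (fun _ : (Fin k → ℕ) => ℝ) 2 :=
    fun σ => ⟨fun x => h (x ∘ σ), (memℓp_two_iff _).mpr (hσs σ)⟩ with hH
  have hnn : 0 ≤ nsq h := nsq_nonneg h
  have hnorm : ∀ σ, ‖H σ‖ = Real.sqrt (nsq h) := by
    intro σ
    have h1 : ‖H σ‖ ^ 2 = nsq h := by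
      rw [lp_norm_sq]
      exact Equiv.tsum_eq (permEquiv σ) (fun y => h y ^ 2)
    nlinarith [norm_nonneg (H σ), Real.sqrt_nonneg (nsq h), Real.sq_sqrt hnn]
  set S := ((k.factorial : ℝ)⁻¹) • ∑ σ : Equiv.Perm (Fin k), H σ with hS
  have hSco : ∀ x, (S : (Fin k → ℕ) → ℝ) x = symz h x := by
    intro x
    rw [hS]
    rw [lp.coeFn_smul]
    simp only [Pi.smul_apply, smul_eq_mul, lp.coeFn_sum, Finset.sum_apply]
    simp only [symz, one_div]
    rfl
  have hb : ‖S‖ ≤ Real.sqrt (nsq h) := by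
    rw [hS]
    rw [norm_smul]
    calc ‖(k.factorial : ℝ)⁻¹‖ * ‖∑ σ : Equiv.Perm (Fin k), H σ‖
        ≤ ‖(k.factorial : ℝ)⁻¹‖ * ∑ σ : Equiv.Perm (Fin k), ‖H σ‖ := by
          apply mul_le_mul_of_nonneg_left (norm_sum_le _ _) (norm_nonneg _)
      _ = Real.sqrt (nsq h) := by
          rw [Finset.sum_congr rfl (fun σ _ => hnorm σ), Finset.sum_const, Finset.card_univ,
            Fintype.card_perm, Fintype.card_fin, Real.norm_eq_abs,
            abs_of_nonneg (by positivity), nsmul_eq_mul]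
          rw [inv_mul_cancel_left₀ (by exact_mod_cast k.factorial_ne_zero)]
  have heq : nsq (symz h) = ‖S‖ ^ 2 := by
    rw [lp_norm_sq]
    exact tsum_congr fun x => by rw [hSco x]
  rw [heq]
  calc ‖S‖ ^ 2 ≤ Real.sqrt (nsq h) ^ 2 := by
        apply pow_le_pow_left₀ (norm_nonneg _) hb
    _ = nsq h := Real.sq_sqrt hnn

/-! ### Main estimate for contractions -/

lemma contr_est {p r : ℕ} (hr0 : 0 < r) (hrp : r < p)
    (f g : (Fin p → ℕ) → ℝ) (hf : IsSym f) (hg : IsSym g)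
    (hfs : Summable fun x => f x ^ 2) (hgs : Summable fun x => g x ^ 2) :
    Summable (fun x => contr p p r f g x ^ 2) ∧
    nsq (contr p p r f g)
      ≤ nsq (contr p p (p - r) f f) / 2 + nsq (contr p p (p - r) g g) / 2 := by
  have hrp' : r ≤ p := le_of_lt hrp
  set F : (Fin (p - r) → ℕ) → (Fin r → ℕ) → ℝ :=
    fun a s => f (cmb (p - r) (pad a) (pad s)) with hFdef
  set G : (Fin (p - r) → ℕ) → (Fin r → ℕ) → ℝ :=
    fun b s => g (cmb (p - r) (pad b) (pad s)) with hGdef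
  have hmr : p = (p - r) + r := by omega
  have hFsum : Summable (fun q : (Fin (p - r) → ℕ) × (Fin r → ℕ) => F q.1 q.2 ^ 2) :=
    ((glueEquiv (p - r) r p hmr).summable_iff (f := fun x => f x ^ 2)).mpr hfs
  have hGsum : Summable (fun q : (Fin (p - r) → ℕ) × (Fin r → ℕ) => G q.1 q.2 ^ 2) :=
    ((glueEquiv (p - r) r p hmr).summable_iff (f := fun x => g x ^ 2)).mpr hgs
  obtain ⟨hD, hbound⟩ := key F G hFsum hGsum
  -- identification of nsq (contr p p r f g)
  have hk1 : p + p - 2 * r = (p - r) + (p - r) := by omega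
  set e1 := glueEquiv (p - r) (p - r) (p + p - 2 * r) hk1 with he1
  have hpt1 : ∀ ab : (Fin (p - r) → ℕ) × (Fin (p - r) → ℕ),
      contr p p r f g (e1 ab) = ∑' s : Fin r → ℕ, F ab.1 s * G ab.2 s := by
    rintro ⟨a, b⟩
    refine tsum_congr fun s => ?_
    have hA : (fun i : Fin p => if i.val < p - r then pad (e1 (a, b)) i.val
        else pad s (i.val - (p - r))) = cmb (p - r) (pad a) (pad s) := by
      funext i
      simp only [cmb]
      by_cases hi : i.val < p - r
      · rw [if_pos hi, if_pos hi, pad_glue_lt hk1 a b hi]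
      · rw [if_neg hi, if_neg hi]
    have hB : (fun i : Fin p => if i.val < p - r then pad (e1 (a, b)) ((p - r) + i.val)
        else pad s (i.val - (p - r))) = cmb (p - r) (pad b) (pad s) := by
      funext i
      simp only [cmb]
      by_cases hi : i.val < p - r
      · rw [if_pos hi, if_pos hi, pad_glue_ge hk1 a b hi]
      · rw [if_neg hi, if_neg hi]
    show f _ * g _ = F a s * G b s
    rw [hA, hB]
  -- identification of nsq (contr p p (p-r) f f)
  have hk2 : p + p - 2 * (p - r) = r + r := by omega
  set e2 := glueEquiv r r (p + p - 2 * (p - r)) hk2 with he2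
  have hpp : p - (p - r) = r := by omega
  have hpt2 : ∀ (h : (Fin p → ℕ) → ℝ), IsSym h → ∀ st : (Fin r → ℕ) × (Fin r → ℕ),
      contr p p (p - r) h h (e2 st)
        = ∑' a : Fin (p - r) → ℕ,
            (h (cmb (p - r) (pad a) (pad st.1)) * h (cmb (p - r) (pad a) (pad st.2))) := by
    rintro h hsym ⟨s, t⟩
    refine tsum_congr fun a => ?_
    have hA : (fun i : Fin p => if i.val < p - (p - r) then pad (e2 (s, t)) i.val
        else pad a (i.val - (p - (p - r)))) = cmb r (pad s) (pad a) := by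
      funext i
      simp only [cmb, hpp]
      by_cases hi : i.val < r
      · rw [if_pos hi, if_pos hi, pad_glue_lt hk2 s t hi]
      · rw [if_neg hi, if_neg hi]
    have hB : (fun i : Fin p => if i.val < p - (p - r) then pad (e2 (s, t)) ((p - (p - r)) + i.val)
        else pad a (i.val - (p - (p - r)))) = cmb r (pad t) (pad a) := by
      funext i
      simp only [cmb, hpp]
      by_cases hi : i.val < r
      · rw [if_pos hi, if_pos hi, pad_glue_ge hk2 s t hi]
      · rw [if_neg hi, if_neg hi]
    show h _ * h _ = _
    rw [hA, hB, swap_eval hrp' hsym (pad s) (pad a), swap_eval hrp' hsym (pad t) (pad a)]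
  -- summability of the contraction coefficients
  have hsummable : Summable (fun x => contr p p r f g x ^ 2) := by
    apply (e1.summable_iff (f := fun x => contr p p r f g x ^ 2)).mp
    apply hD.congr
    intro ab
    rw [Function.comp_apply, hpt1 ab]
  refine ⟨hsummable, ?_⟩
  have hnsq1 : nsq (contr p p r f g)
      = ∑' ab : (Fin (p - r) → ℕ) × (Fin (p - r) → ℕ), (∑' s, F ab.1 s * G ab.2 s) ^ 2 := by
    rw [nsq, ← Equiv.tsum_eq e1 (fun x => contr p p r f g x ^ 2)]
    exact tsum_congr fun ab => by rw [hpt1 ab]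
  have hnsq2 : nsq (contr p p (p - r) f f)
      = ∑' st : (Fin r → ℕ) × (Fin r → ℕ), (∑' a, F a st.1 * F a st.2) ^ 2 := by
    rw [nsq, ← Equiv.tsum_eq e2 (fun x => contr p p (p - r) f f x ^ 2)]
    exact tsum_congr fun st => by rw [hpt2 f hf st]
  have hnsq3 : nsq (contr p p (p - r) g g)
      = ∑' st : (Fin r → ℕ) × (Fin r → ℕ), (∑' b, G b st.1 * G b st.2) ^ 2 := by
    rw [nsq, ← Equiv.tsum_eq e2 (fun x => contr p p (p - r) g g x ^ 2)]
    exact tsum_congr fun st => by rw [hpt2 g hg st]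
  rw [hnsq1, hnsq2, hnsq3]
  exact hbound

/-! ### Combinatorics -/

lemma coef_bound {p r : ℕ} (hr0 : 0 < r) (hrp : r < p) :
    ((r - 1).factorial : ℝ) ^ 2 * (Nat.choose (p - 1) (r - 1) : ℝ) ^ 4
        * ((2 * p - 2 * r).factorial : ℝ)
        * ((r.factorial : ℝ) ^ 2 * ((p - r).factorial : ℝ) ^ 2 / (p.factorial : ℝ) ^ 4)
      ≤ (Nat.choose (2 * (p - r)) (p - r) : ℝ) / (p : ℝ) ^ 2 := by
  have h2 : 2 * p - 2 * r = 2 * (p - r) := by omega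
  rw [h2]
  have e1 : (Nat.choose (p - 1) (r - 1) : ℝ) * ((r - 1).factorial : ℝ)
      * ((p - r).factorial : ℝ) = ((p - 1).factorial : ℝ) := by
    have h := Nat.choose_mul_factorial_mul_factorial (show r - 1 ≤ p - 1 by omega)
    have h3 : p - 1 - (r - 1) = p - r := by omega
    rw [h3] at h
    exact_mod_cast congrArg (fun n : ℕ => (n : ℝ)) h
  have e2 : (Nat.choose (2 * (p - r)) (p - r) : ℝ) * ((p - r).factorial : ℝ)
      * ((p - r).factorial : ℝ) = ((2 * (p - r)).factorial : ℝ) := by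
    have h := Nat.choose_mul_factorial_mul_factorial (show p - r ≤ 2 * (p - r) by omega)
    have h3 : 2 * (p - r) - (p - r) = p - r := by omega
    rw [h3] at h
    exact_mod_cast congrArg (fun n : ℕ => (n : ℝ)) h
  have e3 : (p.factorial : ℝ) = (p : ℝ) * ((p - 1).factorial : ℝ) := by
    exact_mod_cast (Nat.mul_factorial_pred (by omega)).symm
  have e4 : (r.factorial : ℝ) = (r : ℝ) * ((r - 1).factorial : ℝ) := by
    exact_mod_cast (Nat.mul_factorial_pred (by omega)).symm
  have hchne : (0 : ℝ) < (Nat.choose (p - 1) (r - 1) : ℝ) := by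
    exact_mod_cast Nat.choose_pos (show r - 1 ≤ p - 1 by omega)
  have hChnn : (0 : ℝ) ≤ (Nat.choose (2 * (p - r)) (p - r) : ℝ) := by positivity
  have hane : ((r - 1).factorial : ℝ) ≠ 0 := by
    exact_mod_cast (r - 1).factorial_ne_zero
  have hbne : ((p - r).factorial : ℝ) ≠ 0 := by
    exact_mod_cast (p - r).factorial_ne_zero
  have hpne : (p : ℝ) ≠ 0 := by
    have : 0 < p := by omega
    exact_mod_cast this.ne'
  have hLHS : ((r - 1).factorial : ℝ) ^ 2 * (Nat.choose (p - 1) (r - 1) : ℝ) ^ 4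
        * ((2 * (p - r)).factorial : ℝ)
        * ((r.factorial : ℝ) ^ 2 * ((p - r).factorial : ℝ) ^ 2 / (p.factorial : ℝ) ^ 4)
      = (Nat.choose (2 * (p - r)) (p - r) : ℝ) * (r : ℝ) ^ 2 / (p : ℝ) ^ 4 := by
    rw [← e2, e3, e4, ← e1]
    field_simp
  rw [hLHS, div_le_div_iff₀ (by positivity) (by positivity)]
  have hr2 : (r : ℝ) ^ 2 ≤ (p : ℝ) ^ 2 := by
    have : (r : ℝ) ≤ (p : ℝ) := by exact_mod_cast le_of_lt hrp
    nlinarith [show (0:ℝ) ≤ (r:ℝ) by positivity]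
  nlinarith [mul_le_mul_of_nonneg_left hr2
    (mul_nonneg hChnn (sq_nonneg ((p:ℝ))))]

lemma sum_reindex (p : ℕ) :
    ∑ r ∈ Finset.Ioo 0 p, ((2 * (p - r)).choose (p - r) : ℝ)
      = ∑ r ∈ Finset.Ioo 0 p, ((2 * r).choose r : ℝ) := by
  apply Finset.sum_nbij' (i := fun r => p - r) (j := fun r => p - r)
  · intro a ha
    simp only [Finset.mem_Ioo] at *
    omega
  · intro a ha
    simp only [Finset.mem_Ioo] at *
    omega
  · intro a ha
    simp only [Finset.mem_Ioo] at ha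
    omega
  · intro a ha
    simp only [Finset.mem_Ioo] at ha
    omega
  · intro a ha
    simp only [Finset.mem_Ioo] at ha
    congr 2

theorem stmt_15 (p : ℕ) (hp : 1 ≤ p) (f g : (Fin p → ℕ) → ℝ)
    (hf : IsSym f) (hg : IsSym g)
    (hfs : Summable fun x => f x ^ 2) (hgs : Summable fun x => g x ^ 2)
    (A B : ℝ) (hA : 0 ≤ A) (hB : 0 ≤ B)
    (hfc : ∀ r' ∈ Finset.Ioo 0 p,
      nsq (contr p p (p - r') f f)
        ≤ ((r'.factorial : ℝ)^2 * ((p - r').factorial : ℝ)^2 / (p.factorial : ℝ)^4) * A)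
    (hgc : ∀ r' ∈ Finset.Ioo 0 p,
      nsq (contr p p (p - r') g g)
        ≤ ((r'.factorial : ℝ)^2 * ((p - r').factorial : ℝ)^2 / (p.factorial : ℝ)^4) * B) :
    ∑ r ∈ Finset.Ioo 0 p,
        ((r-1).factorial : ℝ)^2 * (Nat.choose (p-1) (r-1) : ℝ)^4 * ((2*p - 2*r).factorial : ℝ)
          * nsq (symz (contr p p r f g))
      ≤ (1 / (p : ℝ)^2) * ((A + B) / 2)
          * (∑ r ∈ Finset.Ioo 0 p, (Nat.choose (2*r) r : ℝ)) * (p : ℝ)^2 := by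
  have hterm : ∀ r ∈ Finset.Ioo 0 p,
      ((r-1).factorial : ℝ)^2 * (Nat.choose (p-1) (r-1) : ℝ)^4 * ((2*p - 2*r).factorial : ℝ)
          * nsq (symz (contr p p r f g))
        ≤ (1 / (p : ℝ)^2) * ((A + B) / 2) * (Nat.choose (2 * (p - r)) (p - r) : ℝ) := by
    intro r hr
    rw [Finset.mem_Ioo] at hr
    obtain ⟨hr0, hrp⟩ := hr
    obtain ⟨hsummable, hineq⟩ := contr_est hr0 hrp f g hf hg hfs hgs
    have h1 : nsq (symz (contr p p r f g)) ≤ nsq (contr p p r f g) :=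
      nsq_symz_le _ hsummable
    have h2 := hfc r (Finset.mem_Ioo.mpr ⟨hr0, hrp⟩)
    have h3 := hgc r (Finset.mem_Ioo.mpr ⟨hr0, hrp⟩)
    have h4 : nsq (symz (contr p p r f g))
        ≤ ((r.factorial : ℝ)^2 * ((p - r).factorial : ℝ)^2 / (p.factorial : ℝ)^4)
            * ((A + B) / 2) := by
      have := hineq
      nlinarith [h1, h2, h3, hineq]
    have hcnn : (0:ℝ) ≤ ((r-1).factorial : ℝ)^2 * (Nat.choose (p-1) (r-1) : ℝ)^4
        * ((2*p - 2*r).factorial : ℝ) := by positivity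
    calc ((r-1).factorial : ℝ)^2 * (Nat.choose (p-1) (r-1) : ℝ)^4
            * ((2*p - 2*r).factorial : ℝ) * nsq (symz (contr p p r f g))
        ≤ ((r-1).factorial : ℝ)^2 * (Nat.choose (p-1) (r-1) : ℝ)^4
            * ((2*p - 2*r).factorial : ℝ)
            * (((r.factorial : ℝ)^2 * ((p - r).factorial : ℝ)^2 / (p.factorial : ℝ)^4)
              * ((A + B) / 2)) := mul_le_mul_of_nonneg_left h4 hcnn
      _ = (((r-1).factorial : ℝ)^2 * (Nat.choose (p-1) (r-1) : ℝ)^4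
            * ((2*p - 2*r).factorial : ℝ)
            * ((r.factorial : ℝ)^2 * ((p - r).factorial : ℝ)^2 / (p.factorial : ℝ)^4))
            * ((A + B) / 2) := by ring
      _ ≤ ((Nat.choose (2 * (p - r)) (p - r) : ℝ) / (p : ℝ)^2) * ((A + B) / 2) :=
          mul_le_mul_of_nonneg_right (coef_bound hr0 hrp) (by positivity)
      _ = (1 / (p : ℝ)^2) * ((A + B) / 2) * (Nat.choose (2 * (p - r)) (p - r) : ℝ) := by
          ring
  have hSnn : (0:ℝ) ≤ ∑ r ∈ Finset.Ioo 0 p, (Nat.choose (2*r) r : ℝ) :=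
    Finset.sum_nonneg fun r _ => by positivity
  calc ∑ r ∈ Finset.Ioo 0 p,
        ((r-1).factorial : ℝ)^2 * (Nat.choose (p-1) (r-1) : ℝ)^4 * ((2*p - 2*r).factorial : ℝ)
          * nsq (symz (contr p p r f g))
      ≤ ∑ r ∈ Finset.Ioo 0 p,
          (1 / (p : ℝ)^2) * ((A + B) / 2) * (Nat.choose (2 * (p - r)) (p - r) : ℝ) :=
        Finset.sum_le_sum hterm
    _ = (1 / (p : ℝ)^2) * ((A + B) / 2)
          * ∑ r ∈ Finset.Ioo 0 p, (Nat.choose (2 * (p - r)) (p - r) : ℝ) := by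
        rw [Finset.mul_sum]
    _ = (1 / (p : ℝ)^2) * ((A + B) / 2)
          * ∑ r ∈ Finset.Ioo 0 p, (Nat.choose (2*r) r : ℝ) := by
        rw [sum_reindex]
    _ ≤ (1 / (p : ℝ)^2) * ((A + B) / 2)
          * (∑ r ∈ Finset.Ioo 0 p, (Nat.choose (2*r) r : ℝ)) * (p : ℝ)^2 := by
        apply le_mul_of_one_le_right
        · apply mul_nonneg (mul_nonneg (by positivity) (by linarith)) hSnn
        · have : (1:ℝ) ≤ (p:ℝ) := by exact_mod_cast hp
          nlinarith
end
end
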